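/- For every integer n ≥ 2, α_n·(β_n − (n−2)/n) ≥ −(2/√3 − 1). -/
import Mathlib


/-- `α_n = (√(3n²+1) − (n+1)) / (3(n−1))`. -/
noncomputable def alph (n : ℕ) : ℝ :=
  (Real.sqrt (3 * (n : ℝ) ^ 2 + 1) - ((n : ℝ) + 1)) / (3 * ((n : ℝ) - 1))

/-- `β_n = (√(3n²+1) − (n−1)) / (2n)`. -/
noncomputable def beta (n : ℕ) : ℝ :=
  (Real.sqrt (3 * (n : ℝ) ^ 2 + 1) - ((n : ℝ) - 1)) / (2 * (n : ℝ))

theorem stmt_9 (n : ℕ) (hn : 2 ≤ n) :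
    alph n * (beta n - ((n : ℝ) - 2) / n) ≥ -(2 / Real.sqrt 3 - 1) := by
  have hx : (2 : ℝ) ≤ (n : ℝ) := by exact_mod_cast hn
  set x : ℝ := (n : ℝ) with hxdef
  have hx0 : (0 : ℝ) < x := by linarith
  have hx1 : (0 : ℝ) < x - 1 := by linarith
  have h3 : (0 : ℝ) ≤ 3 * x ^ 2 + 1 := by positivity
  set s : ℝ := Real.sqrt (3 * x ^ 2 + 1) with hsdef
  have hs2 : s ^ 2 = 3 * x ^ 2 + 1 := Real.sq_sqrt h3
  have hr3 : Real.sqrt 3 ^ 2 = 3 := Real.sq_sqrt (by norm_num)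
  have hr3pos : (0 : ℝ) < Real.sqrt 3 := Real.sqrt_pos.mpr (by norm_num)
  have hsle : s ≤ Real.sqrt 3 * x + 1 := by
    have h1 : (3 * x ^ 2 + 1) ≤ (Real.sqrt 3 * x + 1) ^ 2 := by
      nlinarith [hr3, hr3pos, hx0]
    calc s ≤ Real.sqrt ((Real.sqrt 3 * x + 1) ^ 2) := Real.sqrt_le_sqrt h1
    _ = Real.sqrt 3 * x + 1 := Real.sqrt_sq (by positivity)
  rw [alph, beta, ge_iff_le, ← hxdef, ← hsdef]
  rw [div_sub_div _ _ (by positivity : (2:ℝ) * x ≠ 0) (ne_of_gt hx0)]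
  rw [div_mul_div_comm, neg_sub, le_div_iff₀ (by positivity)]
  have h23 : 2 / Real.sqrt 3 = 2 * Real.sqrt 3 / 3 := by
    rw [div_eq_div_iff (ne_of_gt hr3pos) (by norm_num : (3:ℝ) ≠ 0)]; nlinarith [hr3]
  rw [h23]
  have key := mul_le_mul_of_nonneg_left hsle (le_of_lt (mul_pos hx0 hx1))
  nlinarith [hs2, key, hr3, hr3pos, hx0, hx1, mul_pos hx0 hx1]
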